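/- Let $u_n, v_n \ge 0$ satisfy, for all $n$ beyond some index, $u_{n+1} \le (1 - \mu\eta_n) u_n + C_1 \eta_n v_n + C_2 \eta_n^2$ and $v_{n+1} \le (1 - \tfrac{p_n}{2}) v_n + C_3 \tfrac{\eta_n^2}{p_n} u_n + C_4 \tfrac{\eta_n^2}{p_n} + C_5 \eta_n^2$, where $\eta_n = \eta_0 n^{-\alpha}$, $p_n = \gamma \eta_n^\beta$, $0 < \alpha < 1$, $0 \le \beta < 1$, and $\mu, \gamma, C_i > 0$. Then there exist constants such that $u_n = O(n^{-\alpha\min\{1, 2-2\beta\}})$ and $v_n = O(n^{-2\alpha(1-\beta)})$. -/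

import Mathlib

open Filter Asymptotics

/-- Bernoulli-type bound: `(x+1)^(-c) ≥ x^(-c) - c·x^(-c-1)` for `x ≥ 1`, `0 ≤ c ≤ 2`. -/
lemma aux_bern16 {x c : ℝ} (hx : 1 ≤ x) (hc0 : 0 ≤ c) (hc2 : c ≤ 2) :
    x ^ (-c) - c * x ^ (-c - 1) ≤ (x + 1) ^ (-c) := by
  have hx0 : (0:ℝ) < x := lt_of_lt_of_le one_pos hx
  set t : ℝ := 1 / x with ht
  have ht0 : 0 < t := by positivity
  have ht1 : t ≤ 1 := by rw [ht]; rw [div_le_one hx0]; linarith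
  have hxt : x * (1 + t) = x + 1 := by rw [ht, mul_add, mul_one, mul_one_div_cancel hx0.ne']
  have h1t : (0:ℝ) < 1 + t := by linarith
  have hs : (1 + t) ^ (c/2) ≤ 1 + (c/2) * t := by
    have := rpow_one_add_le_one_add_mul_self (s := t) (by linarith) (by linarith : (0:ℝ) ≤ c/2)
      (by linarith : c/2 ≤ 1)
    linarith [this]
  have hsp : 0 < (1 + t) ^ (c/2) := Real.rpow_pos_of_pos h1t _
  have hsq : (1 + t) ^ (-c) * ((1 + t) ^ (c/2)) ^ 2 = 1 := by
    rw [sq, ← Real.rpow_add h1t, ← Real.rpow_add h1t]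
    norm_num
  have key : 1 - c * t ≤ (1 + t) ^ (-c) := by
    have hpos : 0 < (1 + t) ^ (-c) := Real.rpow_pos_of_pos h1t _
    have hs2 : ((1 + t) ^ (c/2)) ^ 2 ≤ (1 + (c/2) * t) ^ 2 := by nlinarith
    have h3 : 1 ≤ (1 + t) ^ (-c) * (1 + (c/2) * t) ^ 2 := by
      calc (1:ℝ) = (1 + t) ^ (-c) * ((1 + t) ^ (c/2)) ^ 2 := hsq.symm
        _ ≤ _ := by nlinarith
    nlinarith [mul_nonneg (mul_nonneg hc0 hc0) (mul_nonneg ht0.le ht0.le),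
      mul_nonneg (mul_nonneg (mul_nonneg hc0 hc0) hc0) (mul_nonneg (mul_nonneg ht0.le ht0.le) ht0.le)]
  have hxc : 0 < x ^ (-c) := Real.rpow_pos_of_pos hx0 _
  have e1 : (x + 1) ^ (-c) = x ^ (-c) * (1 + t) ^ (-c) := by
    rw [← hxt, Real.mul_rpow (le_of_lt hx0) (le_of_lt h1t)]
  have e2 : x ^ (-c - 1) = x ^ (-c) * t := by
    rw [ht, sub_eq_add_neg, Real.rpow_add hx0, Real.rpow_neg_one]
    ring
  rw [e1, e2]
  nlinarith [mul_le_mul_of_nonneg_left key (le_of_lt hxc)]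

/-- Eventual smallness of `c * n^d` for `d < 0`. -/
lemma aux_ev16 (c d ε : ℝ) (hd : d < 0) (hε : 0 < ε) :
    ∀ᶠ n : ℕ in atTop, c * (n:ℝ) ^ d ≤ ε := by
  have h0 : Tendsto (fun x : ℝ => x ^ d) atTop (nhds 0) := by
    have := tendsto_rpow_neg_atTop (show 0 < -d by linarith)
    simpa using this
  have h1 : Tendsto (fun n : ℕ => c * (n:ℝ) ^ d) atTop (nhds (c * 0)) :=
    (h0.comp tendsto_natCast_atTop_atTop).const_mul c
  rw [mul_zero] at h1
  exact h1.eventually_le_const hε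

set_option maxHeartbeats 2000000 in
/-- Deterministic recursion behind Theorem 1 of the paper: if nonnegative `u, v`
eventually satisfy
`u (n+1) ≤ (1 - μ η n) u n + C₁ η n v n + C₂ η n²` and
`v (n+1) ≤ (1 - p n / 2) v n + C₃ (η n)²/p n · u n + C₄ (η n)²/p n + C₅ (η n)²`,
with `η n = η₀ n^{-α}`, `p n = γ (η n)^β`, `0 < α < 1`, `0 ≤ β < 1`, then
`u n = O(n^{-α min{1, 2-2β}})` and `v n = O(n^{-2α(1-β)})`. -/
theorem stmt16 (u v : ℕ → ℝ) (hu : ∀ n, 0 ≤ u n) (hv : ∀ n, 0 ≤ v n)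
    (η0 γ α β μ C1 C2 C3 C4 C5 : ℝ)
    (hη0 : 0 < η0) (hγ : 0 < γ) (hα0 : 0 < α) (hα1 : α < 1)
    (hβ0 : 0 ≤ β) (hβ1 : β < 1) (hμ : 0 < μ)
    (hC1 : 0 < C1) (hC2 : 0 < C2) (hC3 : 0 < C3) (hC4 : 0 < C4) (hC5 : 0 < C5)
    (η pr : ℕ → ℝ)
    (hη : ∀ n, η n = η0 * (n : ℝ) ^ (-α))
    (hpr : ∀ n, pr n = γ * (η n) ^ β)
    (N0 : ℕ)
    (hrecu : ∀ n ≥ N0,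
      u (n + 1) ≤ (1 - μ * η n) * u n + C1 * η n * v n + C2 * (η n) ^ 2)
    (hrecv : ∀ n ≥ N0,
      v (n + 1) ≤ (1 - pr n / 2) * v n + C3 * (η n) ^ 2 / pr n * u n
        + C4 * (η n) ^ 2 / pr n + C5 * (η n) ^ 2) :
    (u =O[atTop] fun n : ℕ => (n : ℝ) ^ (-(α * min 1 (2 - 2 * β)))) ∧
    (v =O[atTop] fun n : ℕ => (n : ℝ) ^ (-(2 * α * (1 - β)))) := by
  set a := α * min 1 (2 - 2 * β) with ha_def
  set b := 2 * α * (1 - β) with hb_def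
  have hmin0 : 0 < min 1 (2 - 2 * β) := lt_min one_pos (by linarith)
  have hmin1 : min 1 (2 - 2 * β) ≤ 1 := min_le_left _ _
  have hmin2 : min 1 (2 - 2 * β) ≤ 2 - 2 * β := min_le_right _ _
  have ha0 : 0 < a := mul_pos hα0 hmin0
  have haα : a ≤ α := by
    calc a ≤ α * 1 := mul_le_mul_of_nonneg_left hmin1 hα0.le
      _ = α := mul_one α
  have hb0 : 0 < b := by rw [hb_def]; exact mul_pos (by linarith) (by linarith)
  have hab : a ≤ b := by
    have h := mul_le_mul_of_nonneg_left hmin2 hα0.le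
    rw [ha_def, hb_def]; nlinarith [h]
  have hb2 : b ≤ 2 := by
    have h := mul_le_mul hα1.le (show 1 - β ≤ 1 by linarith) (by linarith) zero_le_one
    rw [hb_def]; nlinarith [h]
  have hαβ1 : α * β < 1 := by
    have h := mul_le_mul_of_nonneg_left hβ1.le hα0.le
    nlinarith [h]
  have hsum : α * β + b ≤ 2 * α := by
    have h := mul_nonneg hα0.le hβ0
    rw [hb_def]; nlinarith [h]
  have hbid : α * β - 2 * α = -(α * β + b) := by rw [hb_def]; ring
  clear_value a b
  -- constants
  obtain ⟨P, hP_def⟩ : ∃ P : ℝ, P = γ * η0 ^ (β : ℝ) := ⟨_, rfl⟩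
  have hP : 0 < P := by
    rw [hP_def]
    have := Real.rpow_pos_of_pos hη0 β
    positivity
  obtain ⟨g, hg_def⟩ : ∃ g : ℝ, g = min P 2 / 2 := ⟨_, rfl⟩
  have hg0 : 0 < g := by
    rw [hg_def]
    have : 0 < min P 2 := lt_min hP two_pos
    positivity
  have hg1 : g ≤ 1 := by
    have : min P 2 ≤ 2 := min_le_right _ _
    rw [hg_def]; linarith
  have hgP : g ≤ P / 2 := by
    have : min P 2 ≤ P := min_le_left _ _
    rw [hg_def]; linarith
  obtain ⟨D3, hD3_def⟩ : ∃ D : ℝ, D = C3 * η0 ^ 2 / P := ⟨_, rfl⟩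
  obtain ⟨D4, hD4_def⟩ : ∃ D : ℝ, D = C4 * η0 ^ 2 / P := ⟨_, rfl⟩
  have hD3 : 0 < D3 := by rw [hD3_def]; positivity
  have hD4 : 0 < D4 := by rw [hD4_def]; positivity
  obtain ⟨B0, hB0_def⟩ : ∃ B : ℝ, B = (D4 + C5 * η0 ^ 2 + 1) * (4 / g) := ⟨_, rfl⟩
  have hB0 : 0 < B0 := by rw [hB0_def]; positivity
  obtain ⟨A0, hA0_def⟩ : ∃ A : ℝ, A = (C1 * η0 * B0 + C2 * η0 ^ 2) * (2 / (μ * η0)) := ⟨_, rfl⟩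
  have hA0 : 0 < A0 := by rw [hA0_def]; positivity
  have hB0eq : g * B0 = 4 * (D4 + C5 * η0 ^ 2 + 1) := by
    rw [hB0_def]; field_simp
  have hA0eq : μ * η0 * A0 = 2 * (C1 * η0 * B0 + C2 * η0 ^ 2) := by
    rw [hA0_def]; field_simp
  -- choice of N
  have hev : ∀ᶠ n : ℕ in atTop,
      ((N0 ≤ n ∧ 1 ≤ n) ∧ μ * η0 * (n:ℝ) ^ (-α) ≤ 1 ∧ a * (n:ℝ) ^ (α - 1) ≤ μ * η0 / 2) ∧
      (b * (n:ℝ) ^ (α * β - 1) ≤ g / 4 ∧ D3 * A0 * (n:ℝ) ^ (-a) ≤ 1) := by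
    have e1 := eventually_ge_atTop N0
    have e2 := eventually_ge_atTop 1
    have e3 := aux_ev16 (μ * η0) (-α) 1 (by linarith) one_pos
    have e4 := aux_ev16 a (α - 1) (μ * η0 / 2) (by linarith) (by positivity)
    have e5 := aux_ev16 b (α * β - 1) (g / 4) (by linarith) (by exact div_pos hg0 (by norm_num))
    have e6 := aux_ev16 (D3 * A0) (-a) 1 (by linarith) one_pos
    filter_upwards [e1, e2, e3, e4, e5, e6] with n h1 h2 h3 h4 h5 h6
    exact ⟨⟨⟨h1, h2⟩, h3, h4⟩, h5, h6⟩
  obtain ⟨N, ⟨⟨⟨hNN0, hN1⟩, hn3, hn4⟩, hn5, hn6⟩⟩ := hev.exists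
  have hN0r : (0:ℝ) < (N:ℝ) := by exact_mod_cast hN1
  -- scaling
  obtain ⟨lam, hlam_def⟩ : ∃ l : ℝ,
      l = max 1 (max (u N / (A0 * (N:ℝ) ^ (-a))) (v N / (B0 * (N:ℝ) ^ (-b)))) := ⟨_, rfl⟩
  have hlam1 : 1 ≤ lam := by rw [hlam_def]; exact le_max_left _ _
  obtain ⟨A, hA_def⟩ : ∃ A : ℝ, A = lam * A0 := ⟨_, rfl⟩
  obtain ⟨B, hB_def⟩ : ∃ B : ℝ, B = lam * B0 := ⟨_, rfl⟩
  have hA : 0 < A := by rw [hA_def]; exact mul_pos (by linarith) hA0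
  have hB : 0 < B := by rw [hB_def]; exact mul_pos (by linarith) hB0
  have baseu : u N ≤ A * (N:ℝ) ^ (-a) := by
    have hr := Real.rpow_pos_of_pos hN0r (-a)
    have hd : 0 < A0 * (N:ℝ) ^ (-a) := by positivity
    have h1 : u N / (A0 * (N:ℝ) ^ (-a)) ≤ lam := by
      rw [hlam_def]; exact le_trans (le_max_left _ _) (le_max_right _ _)
    rw [div_le_iff₀ hd] at h1
    calc u N ≤ lam * (A0 * (N:ℝ) ^ (-a)) := h1
      _ = A * (N:ℝ) ^ (-a) := by rw [hA_def]; ring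
  have basev : v N ≤ B * (N:ℝ) ^ (-b) := by
    have hr := Real.rpow_pos_of_pos hN0r (-b)
    have hd : 0 < B0 * (N:ℝ) ^ (-b) := by positivity
    have h1 : v N / (B0 * (N:ℝ) ^ (-b)) ≤ lam := by
      rw [hlam_def]; exact le_trans (le_max_right _ _) (le_max_right _ _)
    rw [div_le_iff₀ hd] at h1
    calc v N ≤ lam * (B0 * (N:ℝ) ^ (-b)) := h1
      _ = B * (N:ℝ) ^ (-b) := by rw [hB_def]; ring
  -- scaled constant inequalities
  have constu : C1 * η0 * B + C2 * η0 ^ 2 + A * a * (N:ℝ) ^ (α - 1) ≤ μ * η0 * A := by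
    have h2 : A0 * (a * (N:ℝ) ^ (α - 1)) ≤ A0 * (μ * η0 / 2) :=
      mul_le_mul_of_nonneg_left hn4 hA0.le
    have h2' : lam * (A0 * (a * (N:ℝ) ^ (α - 1))) ≤ lam * (A0 * (μ * η0 / 2)) :=
      mul_le_mul_of_nonneg_left h2 (by linarith)
    have h3 : C2 * η0 ^ 2 ≤ lam * (C2 * η0 ^ 2) := le_mul_of_one_le_left (by positivity) hlam1
    have e : μ * η0 * A = 2 * (C1 * η0 * B) + 2 * (lam * (C2 * η0 ^ 2)) := by
      rw [hA_def, hB_def]; linear_combination lam * hA0eq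
    have e2 : A * a * (N:ℝ) ^ (α - 1) = lam * (A0 * (a * (N:ℝ) ^ (α - 1))) := by
      rw [hA_def]; ring
    have e3 : lam * (A0 * (μ * η0 / 2)) = (C1 * η0 * B) + lam * (C2 * η0 ^ 2) := by
      rw [hB_def]; linear_combination (lam / 2) * hA0eq
    linarith
  have constv : D3 * A * (N:ℝ) ^ (-a) + D4 + C5 * η0 ^ 2 + B * b * (N:ℝ) ^ (α * β - 1)
      ≤ g * B := by
    have h2 : lam * (D3 * A0 * (N:ℝ) ^ (-a)) ≤ lam * 1 :=
      mul_le_mul_of_nonneg_left hn6 (by linarith)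
    have h4 : B0 * (b * (N:ℝ) ^ (α * β - 1)) ≤ B0 * (g / 4) :=
      mul_le_mul_of_nonneg_left hn5 hB0.le
    have h4' : lam * (B0 * (b * (N:ℝ) ^ (α * β - 1))) ≤ lam * (B0 * (g / 4)) :=
      mul_le_mul_of_nonneg_left h4 (by linarith)
    have h5 : D4 + C5 * η0 ^ 2 ≤ lam * (D4 + C5 * η0 ^ 2) :=
      le_mul_of_one_le_left (add_nonneg hD4.le (by positivity)) hlam1
    have e1 : D3 * A * (N:ℝ) ^ (-a) = lam * (D3 * A0 * (N:ℝ) ^ (-a)) := by rw [hA_def]; ring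
    have e3 : B * b * (N:ℝ) ^ (α * β - 1) = lam * (B0 * (b * (N:ℝ) ^ (α * β - 1))) := by
      rw [hB_def]; ring
    have e6 : g * B = lam * (4 * (D4 + C5 * η0 ^ 2 + 1)) := by
      rw [hB_def, ← hB0eq]; ring
    have e7 : lam * (B0 * (g / 4)) = lam * (D4 + C5 * η0 ^ 2 + 1) := by
      linear_combination (lam / 4) * hB0eq
    have h8 : 0 ≤ lam * (D4 + C5 * η0 ^ 2 + 1) :=
      mul_nonneg (by linarith) (by positivity)
    linarith [h2, h4', h5, h8]
  -- main induction
  have main : ∀ n, N ≤ n → u n ≤ A * (n:ℝ) ^ (-a) ∧ v n ≤ B * (n:ℝ) ^ (-b) := by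
    intro n hn
    induction n, hn using Nat.le_induction with
    | base => exact ⟨baseu, basev⟩
    | succ n hn ih =>
      have hxN : (N:ℝ) ≤ (n:ℝ) := by exact_mod_cast hn
      have hx1 : (1:ℝ) ≤ (n:ℝ) := by
        have : (1:ℕ) ≤ n := le_trans hN1 hn
        exact_mod_cast this
      have hx0 : (0:ℝ) < (n:ℝ) := by linarith
      set x := (n:ℝ) with hx_def
      have hcast : ((n+1 : ℕ) : ℝ) = x + 1 := by push_cast; ring
      have rp : ∀ c : ℝ, (0:ℝ) < x ^ c := fun c => Real.rpow_pos_of_pos hx0 c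
      have hmono : ∀ c d : ℝ, c ≤ d → x ^ c ≤ x ^ d :=
        fun c d h => Real.rpow_le_rpow_of_exponent_le hx1 h
      have hbase : ∀ c : ℝ, c ≤ 0 → x ^ c ≤ (N:ℝ) ^ c :=
        fun c h => Real.rpow_le_rpow_of_nonpos hN0r hxN h
      have hadd : ∀ c d : ℝ, x ^ c * x ^ d = x ^ (c + d) :=
        fun c d => (Real.rpow_add hx0 c d).symm
      have hηn : η n = η0 * x ^ (-α) := hη n
      have hη2 : (η n) ^ 2 = η0 ^ 2 * x ^ (-(2*α)) := by
        rw [hηn, mul_pow, sq (x ^ (-α)), hadd]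
        ring_nf
      have hprx : pr n = P * x ^ (-(α*β)) := by
        rw [hpr n, hηn, Real.mul_rpow hη0.le (Real.rpow_nonneg hx0.le _),
          ← Real.rpow_mul hx0.le, show (-α)*β = -(α*β) by ring, hP_def]
        ring
      have hηpos : 0 < η n := by rw [hηn]; positivity
      have hprpos : 0 < pr n := by
        rw [hprx]; exact mul_pos hP (rp _)
      constructor
      · -- u part
        have hcoef0 : 0 ≤ 1 - μ * η n := by
          have h1 : x ^ (-α) ≤ (N:ℝ) ^ (-α) := hbase _ (by linarith)
          have h2 := mul_le_mul_of_nonneg_left h1 (show (0:ℝ) ≤ μ * η0 by positivity)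
          rw [hηn]; linarith [hn3, h2]
        have s1 : u (n+1) ≤ (1 - μ * η n) * (A * x ^ (-a)) + C1 * η n * (B * x ^ (-b))
            + C2 * (η n) ^ 2 := by
          have h := hrecu n (le_trans hNN0 hn)
          have t1 : (1 - μ * η n) * u n ≤ (1 - μ * η n) * (A * x ^ (-a)) :=
            mul_le_mul_of_nonneg_left ih.1 hcoef0
          have t2 : C1 * η n * v n ≤ C1 * η n * (B * x ^ (-b)) :=
            mul_le_mul_of_nonneg_left ih.2 (by positivity)
          linarith
        have hMa : x ^ (-(α+a)) = x ^ (-α) * x ^ (-a) := by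
          rw [hadd]; congr 1; ring
        have hMb : x ^ (-(α+b)) = x ^ (-α) * x ^ (-b) := by
          rw [hadd]; congr 1; ring
        have s2 : (1 - μ * η n) * (A * x ^ (-a)) + C1 * η n * (B * x ^ (-b)) + C2 * (η n) ^ 2
            = A * x ^ (-a) - μ * η0 * A * x ^ (-(α+a)) + C1 * η0 * B * x ^ (-(α+b))
              + C2 * η0 ^ 2 * x ^ (-(2*α)) := by
          rw [hη2, hηn, hMa, hMb]; ring
        have s3 : A * x ^ (-a) - A * a * x ^ (-(a+1)) ≤ A * (x+1) ^ (-a) := by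
          have h := aux_bern16 hx1 ha0.le (by linarith : a ≤ 2)
          have he : x ^ (-a-1) = x ^ (-(a+1)) := by congr 1; ring
          rw [he] at h
          have := mul_le_mul_of_nonneg_left h hA.le
          linarith [this]
        have E1 : x ^ (-(α+b)) ≤ x ^ (-(α+a)) := hmono _ _ (by linarith)
        have E2 : x ^ (-(2*α)) ≤ x ^ (-(α+a)) := hmono _ _ (by linarith)
        have E3 : x ^ (-(a+1)) ≤ (N:ℝ) ^ (α-1) * x ^ (-(α+a)) := by
          have h1 : x ^ (-(a+1)) = x ^ (α-1) * x ^ (-(α+a)) := by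
            rw [hadd]; congr 1; ring
          have h2 : x ^ (α-1) ≤ (N:ℝ) ^ (α-1) := hbase _ (by linarith)
          rw [h1]; exact mul_le_mul_of_nonneg_right h2 (rp _).le
        have keyu : C1 * η0 * B * x ^ (-(α+b)) + C2 * η0 ^ 2 * x ^ (-(2*α))
            + A * a * x ^ (-(a+1)) ≤ μ * η0 * A * x ^ (-(α+a)) := by
          have p1 := mul_le_mul_of_nonneg_left E1
            (show (0:ℝ) ≤ C1 * η0 * B from mul_nonneg (by positivity) hB.le)
          have p2 := mul_le_mul_of_nonneg_left E2
            (show (0:ℝ) ≤ C2 * η0 ^ 2 by positivity)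
          have p3 := mul_le_mul_of_nonneg_left E3
            (mul_nonneg hA.le ha0.le)
          have p4 := mul_le_mul_of_nonneg_right constu (rp (-(α+a))).le
          linarith [p1, p2, p3, p4]
        rw [hcast]
        calc u (n+1) ≤ _ := s1
          _ = _ := s2
          _ ≤ A * x ^ (-a) - A * a * x ^ (-(a+1)) := by linarith [keyu]
          _ ≤ A * (x+1) ^ (-a) := s3
      · -- v part
        have hxab1 : x ^ (-(α*β)) ≤ 1 :=
          Real.rpow_le_one_of_one_le_of_nonpos hx1 (neg_nonpos.mpr (mul_nonneg hα0.le hβ0))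
        have hcase : (1 - pr n / 2) * v n ≤ (1 - g * x ^ (-(α*β))) * (B * x ^ (-b)) := by
          have hgx : g * x ^ (-(α*β)) ≤ 1 := by
            have := mul_le_mul_of_nonneg_left hxab1 hg0.le
            linarith
          rcases le_or_gt (1 - pr n / 2) 0 with h | h
          · have rhs0 : 0 ≤ (1 - g * x ^ (-(α*β)))* (B * x ^ (-b)) :=
              mul_nonneg (by linarith) (mul_nonneg hB.le (rp (-b)).le)
            have := mul_nonpos_of_nonpos_of_nonneg h (hv n)
            linarith
          · have h2 : g * x ^ (-(α*β)) ≤ pr n / 2 := by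
              rw [hprx]
              have := mul_le_mul_of_nonneg_right hgP (rp (-(α*β))).le
              linarith
            have t2 : (1 - pr n / 2) * (B * x ^ (-b)) ≤
                (1 - g * x ^ (-(α*β))) * (B * x ^ (-b)) :=
              mul_le_mul_of_nonneg_right (by linarith) (mul_nonneg hB.le (rp (-b)).le)
            have t1 : (1 - pr n / 2) * v n ≤ (1 - pr n / 2) * (B * x ^ (-b)) :=
              mul_le_mul_of_nonneg_left ih.2 h.le
            linarith
        have hdiv : x ^ (-(2*α)) / x ^ (-(α*β)) = x ^ (-(α*β+b)) := by
          rw [← Real.rpow_sub hx0]; congr 1; rw [hb_def]; ring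
        have e13 : C3 * (η n) ^ 2 / pr n = C3 * η0 ^ 2 / P * x ^ (-(α*β+b)) := by
          rw [hη2, hprx, ← hdiv]
          field_simp
        have e14 : C4 * (η n) ^ 2 / pr n = D4 * x ^ (-(α*β+b)) := by
          rw [hη2, hprx, ← hdiv, hD4_def]
          field_simp
        have e13' : C3 * (η n) ^ 2 / pr n = D3 * x ^ (-(α*β+b)) := by
          rw [e13, hD3_def]
        have term3 : C3 * (η n) ^ 2 / pr n * u n ≤ D3 * A * x ^ (-(α*β+b+a)) := by
          have hcoe : (0:ℝ) ≤ D3 * x ^ (-(α*β+b)) := mul_nonneg hD3.le (rp (-(α*β+b))).le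
          have h1 : C3 * (η n) ^ 2 / pr n * u n ≤ D3 * x ^ (-(α*β+b)) * (A * x ^ (-a)) := by
            rw [e13']
            exact mul_le_mul_of_nonneg_left ih.1 hcoe
          have e2 : x ^ (-(α*β+b)) * x ^ (-a) = x ^ (-(α*β+b+a)) := by
            rw [hadd]; congr 1; ring
          calc C3 * (η n) ^ 2 / pr n * u n ≤ D3 * x ^ (-(α*β+b)) * (A * x ^ (-a)) := h1
            _ = D3 * A * x ^ (-(α*β+b+a)) := by rw [← e2]; ring
        have hC5e : C5 * (η n) ^ 2 = C5 * η0 ^ 2 * x ^ (-(2*α)) := by rw [hη2]; ring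
        have s1v : v (n+1) ≤ (1 - g * x ^ (-(α*β))) * (B * x ^ (-b))
            + D3 * A * x ^ (-(α*β+b+a)) + D4 * x ^ (-(α*β+b))
            + C5 * η0 ^ 2 * x ^ (-(2*α)) := by
          have h := hrecv n (le_trans hNN0 hn)
          linarith [hcase, term3, e14, hC5e, h]
        have s2v : (1 - g * x ^ (-(α*β))) * (B * x ^ (-b))
            = B * x ^ (-b) - g * B * x ^ (-(α*β+b)) := by
          have e : x ^ (-(α*β)) * x ^ (-b) = x ^ (-(α*β+b)) := by
            rw [hadd]; congr 1; ring
          rw [← e]; ring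
        have F1 : x ^ (-(α*β+b+a)) ≤ (N:ℝ) ^ (-a) * x ^ (-(α*β+b)) := by
          have h1 : x ^ (-(α*β+b+a)) = x ^ (-a) * x ^ (-(α*β+b)) := by
            rw [hadd]; congr 1; ring
          have h2 : x ^ (-a) ≤ (N:ℝ) ^ (-a) := hbase _ (by linarith)
          rw [h1]; exact mul_le_mul_of_nonneg_right h2 (rp _).le
        have F2 : x ^ (-(2*α)) ≤ x ^ (-(α*β+b)) := hmono _ _ (by linarith)
        have F3 : x ^ (-(b+1)) ≤ (N:ℝ) ^ (α*β-1) * x ^ (-(α*β+b)) := by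
          have h1 : x ^ (-(b+1)) = x ^ (α*β-1) * x ^ (-(α*β+b)) := by
            rw [hadd]; congr 1; ring
          have h2 : x ^ (α*β-1) ≤ (N:ℝ) ^ (α*β-1) := hbase _ (by linarith)
          rw [h1]; exact mul_le_mul_of_nonneg_right h2 (rp _).le
        have keyv : D3 * A * x ^ (-(α*β+b+a)) + D4 * x ^ (-(α*β+b))
            + C5 * η0 ^ 2 * x ^ (-(2*α)) + B * b * x ^ (-(b+1))
            ≤ g * B * x ^ (-(α*β+b)) := by
          have p1 := mul_le_mul_of_nonneg_left F1
            (mul_nonneg hD3.le hA.le)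
          have p2 := mul_le_mul_of_nonneg_left F2
            (show (0:ℝ) ≤ C5 * η0 ^ 2 by positivity)
          have p3 := mul_le_mul_of_nonneg_left F3
            (mul_nonneg hB.le hb0.le)
          have p4 := mul_le_mul_of_nonneg_right constv (rp (-(α*β+b))).le
          linarith [p1, p2, p3, p4]
        have s3v : B * x ^ (-b) - B * b * x ^ (-(b+1)) ≤ B * (x+1) ^ (-b) := by
          have h := aux_bern16 hx1 hb0.le hb2
          have he : x ^ (-b-1) = x ^ (-(b+1)) := by congr 1; ring
          rw [he] at h
          have := mul_le_mul_of_nonneg_left h hB.le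
          linarith [this]
        rw [hcast]
        calc v (n+1) ≤ _ := s1v
          _ = B * x ^ (-b) - g * B * x ^ (-(α*β+b)) + D3 * A * x ^ (-(α*β+b+a))
              + D4 * x ^ (-(α*β+b)) + C5 * η0 ^ 2 * x ^ (-(2*α)) := by rw [s2v]
          _ ≤ B * x ^ (-b) - B * b * x ^ (-(b+1)) := by linarith [keyv]
          _ ≤ B * (x+1) ^ (-b) := s3v
  constructor
  · rw [isBigO_iff]
    refine ⟨A, ?_⟩
    filter_upwards [eventually_ge_atTop N] with n hn
    have h := (main n hn).1
    have h2 : (0:ℝ) ≤ (n:ℝ) ^ (-a) := Real.rpow_nonneg (Nat.cast_nonneg n) _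
    rw [Real.norm_eq_abs, Real.norm_eq_abs, abs_of_nonneg (hu n), abs_of_nonneg h2]
    exact h
  · rw [isBigO_iff]
    refine ⟨B, ?_⟩
    filter_upwards [eventually_ge_atTop N] with n hn
    have h := (main n hn).2
    have h2 : (0:ℝ) ≤ (n:ℝ) ^ (-b) := Real.rpow_nonneg (Nat.cast_nonneg n) _
    rw [Real.norm_eq_abs, Real.norm_eq_abs, abs_of_nonneg (hv n), abs_of_nonneg h2]
    exact h
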